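/- Let α ∈ ℝ and set δ := −α/2. Let u : ℝ → 𝒮(ℝ;ℂ) be a continuously differentiable curve in the Schwartz space, written u(t,x), solving the nonlocal derivative NLS: i∂ₜu + ∂ₓ²u + α u u* ∂ₓu = 0 pointwise, where u*(t,x) := conj(u(t,−x)). Define v(t,x) := u(t,x)·exp(−δ·∂ₓ⁻¹(u(t,·) u*(t,·))(x)). Then v solves, for all (t,x), i∂ₜv + ∂ₓ²v − α v² ∂ₓ(v*) − (α²/2) v³ (v*)² = 0, where v*(t,x) := conj(v(t,−x)). -/

import Mathlib

open MeasureTheory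

/-- The antiderivative `∂ₓ⁻¹ f (x) = ½(∫_{-∞}^x f − ∫_x^∞ f)`. -/
noncomputable def pinv (f : ℝ → ℂ) (x : ℝ) : ℂ :=
  (1 / 2 : ℂ) * ((∫ y in Set.Iic x, f y) - ∫ y in Set.Ici x, f y)

namespace NdNLSAux

open Filter Set SchwartzMap Complex Topology

/-- Decay bound constant. -/
noncomputable def SB (f : SchwartzMap ℝ ℂ) : ℝ :=
  SchwartzMap.seminorm ℝ 0 0 f + SchwartzMap.seminorm ℝ 2 0 f

lemma norm_le_SB (f : SchwartzMap ℝ ℂ) (y : ℝ) : ‖f y‖ ≤ SB f :=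
  le_trans (SchwartzMap.norm_le_seminorm ℝ f y) (le_add_of_nonneg_right (apply_nonneg _ _))

lemma norm_le_SB_decay (f : SchwartzMap ℝ ℂ) (y : ℝ) : ‖f y‖ ≤ SB f * (1 + y ^ 2)⁻¹ := by
  have h0 : ‖f y‖ ≤ SchwartzMap.seminorm ℝ 0 0 f := SchwartzMap.norm_le_seminorm ℝ f y
  have h2 : ‖y‖ ^ 2 * ‖f y‖ ≤ SchwartzMap.seminorm ℝ 2 0 f :=
    SchwartzMap.norm_pow_mul_le_seminorm ℝ f 2 y
  rw [Real.norm_eq_abs, _root_.sq_abs] at h2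
  have hy : (0:ℝ) < 1 + y ^ 2 := by positivity
  have key : (1 + y ^ 2) * ‖f y‖ ≤ SB f := by rw [SB]; nlinarith
  calc ‖f y‖ = ((1 + y ^ 2) * ‖f y‖) * (1 + y ^ 2)⁻¹ := by field_simp
    _ ≤ SB f * (1 + y ^ 2)⁻¹ := by
        exact mul_le_mul_of_nonneg_right key (by positivity)

lemma SB_continuous : Continuous SB := by
  have h1 := (schwartz_withSeminorms ℝ ℝ ℂ).continuous_seminorm (0, 0)
  have h2 := (schwartz_withSeminorms ℝ ℝ ℂ).continuous_seminorm (2, 0)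
  exact h1.add h2

lemma schwartz_tendsto_atTop (f : SchwartzMap ℝ ℂ) : Tendsto f atTop (𝓝 0) :=
  (zero_at_infty f).mono_left (by rw [cocompact_eq_atBot_atTop]; exact le_sup_right)

lemma schwartz_tendsto_atBot (f : SchwartzMap ℝ ℂ) : Tendsto f atBot (𝓝 0) :=
  (zero_at_infty f).mono_left (by rw [cocompact_eq_atBot_atTop]; exact le_sup_left)

lemma integrable_mul_conj_neg (f g : SchwartzMap ℝ ℂ) :
    Integrable (fun y => f y * (starRingEnd ℂ) (g (-y))) := by
  have hb : ∃ C, ∀ y : ℝ, ‖(starRingEnd ℂ) (g (-y))‖ ≤ C :=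
    ⟨SB g, fun y => by simpa using norm_le_SB g (-y)⟩
  have hm : AEStronglyMeasurable (fun y : ℝ => (starRingEnd ℂ) (g (-y))) volume :=
    (Complex.continuous_conj.comp (g.continuous.comp continuous_neg)).aestronglyMeasurable
  have := f.integrable (μ := volume) |>.bdd_mul hm (ae_of_all _ hb.choose_spec)
  simpa [mul_comm] using this

lemma conjD {f : ℝ → ℂ} {f' : ℂ} {z : ℝ} (h : HasDerivAt f f' z) :
    HasDerivAt (fun y => (starRingEnd ℂ) (f y)) ((starRingEnd ℂ) f') z := by
  have := (Complex.conjCLE.toContinuousLinearMap.hasFDerivAt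
    (x := f z)).comp_hasDerivAt z h
  simpa [Function.comp_def] using this

lemma pinv_eq {f : ℝ → ℂ} (hf : Integrable f) (x : ℝ) :
    pinv f x = (∫ y in Set.Iic x, f y) - (1 / 2 : ℂ) * ∫ y, f y := by
  have h : (∫ y in Set.Iic x, f y) + ∫ y in Set.Ioi x, f y = ∫ y, f y :=
    intervalIntegral.integral_Iic_add_Ioi hf.integrableOn hf.integrableOn
  rw [pinv, integral_Ici_eq_integral_Ioi]
  linear_combination (-(1 / 2 : ℂ)) * h

lemma pinv_hasDerivAt {f : ℝ → ℂ} (hf : Integrable f) (hc : Continuous f) (x : ℝ) :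
    HasDerivAt (pinv f) (f x) x := by
  have h1 : ∀ z : ℝ, pinv f z
      = (∫ y in (0:ℝ)..z, f y) + ((∫ y in Set.Iic (0:ℝ), f y) - (1 / 2 : ℂ) * ∫ y, f y) := by
    intro z
    rw [pinv_eq hf, ← intervalIntegral.integral_Iic_sub_Iic hf.integrableOn hf.integrableOn]
    ring
  have h2 : HasDerivAt (fun z => ∫ y in (0:ℝ)..z, f y) (f x) x :=
    intervalIntegral.integral_hasDerivAt_right hf.intervalIntegrable
      hc.aestronglyMeasurable.stronglyMeasurableAtFilter hc.continuousAt
  have h3 := h2.add_const ((∫ y in Set.Iic (0:ℝ), f y) - (1 / 2 : ℂ) * ∫ y, f y)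
  exact h3.congr_of_eventuallyEq (Filter.Eventually.of_forall h1)

lemma pinv_of_deriv {g g' : ℝ → ℂ} (hd : ∀ x, HasDerivAt g (g' x) x) (hi : Integrable g')
    (hbot : Filter.Tendsto g Filter.atBot (nhds 0))
    (htop : Filter.Tendsto g Filter.atTop (nhds 0)) (x : ℝ) : pinv g' x = g x := by
  have h1 : ∫ y in Set.Iic x, g' y = g x - 0 :=
    integral_Iic_of_hasDerivAt_of_tendsto' (fun y _ => hd y) hi.integrableOn hbot
  have h2 : ∫ y in Set.Ioi x, g' y = 0 - g x :=
    integral_Ioi_of_hasDerivAt_of_tendsto' (fun y _ => hd y) hi.integrableOn htop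
  rw [pinv, integral_Ici_eq_integral_Ioi, h1, h2]
  ring

lemma pinv_conj_neg {f : ℝ → ℂ} (hsym : ∀ y, (starRingEnd ℂ) (f (-y)) = f y) (x : ℝ) :
    (starRingEnd ℂ) (pinv f (-x)) = - pinv f x := by
  have key1 : ∫ y in Set.Iic (-x), (starRingEnd ℂ) (f y) = ∫ y in Set.Ioi x, f y := by
    have := integral_comp_neg_Iic (-x) (fun z => (starRingEnd ℂ) (f (-z)))
    simp only [neg_neg, hsym] at this ⊢
    rw [← this]
  have key2 : ∫ y in Set.Ioi (-x), (starRingEnd ℂ) (f y) = ∫ y in Set.Iic x, f y := by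
    have := integral_comp_neg_Ioi (-x) (fun z => (starRingEnd ℂ) (f (-z)))
    simp only [neg_neg, hsym] at this ⊢
    rw [← this]
  rw [pinv, pinv, integral_Ici_eq_integral_Ioi, integral_Ici_eq_integral_Ioi]
  rw [map_mul, map_sub, ← integral_conj, ← integral_conj, key1, key2]
  simp [map_ofNat]
  ring
lemma key_setIntegral (u ut : ℝ → SchwartzMap ℝ ℂ) (hu : Continuous u) (hut : Continuous ut)
    (hderiv : ∀ t x : ℝ, HasDerivAt (fun τ => u τ x) (ut t x) t) (t : ℝ) (s : Set ℝ) :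
    HasDerivAt (fun τ => ∫ y in s, u τ y * (starRingEnd ℂ) (u τ (-y)))
      (∫ y in s, (ut t y * (starRingEnd ℂ) (u t (-y)) + u t y * (starRingEnd ℂ) (ut t (-y)))) t := by
  obtain ⟨C₁, hC₁⟩ : ∃ C, ∀ τ ∈ Set.Icc (t - 1) (t + 1), ‖SB (u τ)‖ ≤ C :=
    isCompact_Icc.exists_bound_of_continuousOn (SB_continuous.comp hu).continuousOn
  obtain ⟨C₂, hC₂⟩ : ∃ C, ∀ τ ∈ Set.Icc (t - 1) (t + 1), ‖SB (ut τ)‖ ≤ C :=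
    isCompact_Icc.exists_bound_of_continuousOn (SB_continuous.comp hut).continuousOn
  have hball : ∀ τ ∈ Metric.ball t 1, τ ∈ Set.Icc (t - 1) (t + 1) := by
    intro τ hτ
    rw [Metric.mem_ball, Real.dist_eq] at hτ
    have := abs_lt.mp hτ
    constructor <;> linarith [this.1, this.2]
  have hC₁0 : (0:ℝ) ≤ C₁ := le_trans (norm_nonneg _) (hC₁ t ⟨by linarith, by linarith⟩)
  have hC₂0 : (0:ℝ) ≤ C₂ := le_trans (norm_nonneg _) (hC₂ t ⟨by linarith, by linarith⟩)
  have hcont : ∀ τ : ℝ, Continuous fun y => u τ y * (starRingEnd ℂ) (u τ (-y)) :=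
    fun τ => (u τ).continuous.mul
      (Complex.continuous_conj.comp ((u τ).continuous.comp continuous_neg))
  have hcont' : Continuous fun y =>
      ut t y * (starRingEnd ℂ) (u t (-y)) + u t y * (starRingEnd ℂ) (ut t (-y)) :=
    ((ut t).continuous.mul
      (Complex.continuous_conj.comp ((u t).continuous.comp continuous_neg))).add
    ((u t).continuous.mul
      (Complex.continuous_conj.comp ((ut t).continuous.comp continuous_neg)))
  have H := hasDerivAt_integral_of_dominated_loc_of_deriv_le
    (μ := volume.restrict s) (x₀ := t)
    (F := fun τ y => u τ y * (starRingEnd ℂ) (u τ (-y)))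
    (F' := fun τ y => ut τ y * (starRingEnd ℂ) (u τ (-y)) + u τ y * (starRingEnd ℂ) (ut τ (-y)))
    (bound := fun y => C₁ * C₂ * (1 + y ^ 2)⁻¹ + C₁ * C₂ * (1 + y ^ 2)⁻¹)
    (Metric.ball_mem_nhds t one_pos)
    (Filter.Eventually.of_forall fun τ => ((hcont τ).aestronglyMeasurable).restrict)
    ((integrable_mul_conj_neg (u t) (u t)).restrict)
    (hcont'.aestronglyMeasurable.restrict)
    ?_ ?_ ?_
  · exact H.2
  · refine MeasureTheory.ae_of_all _ fun y τ hτ => ?_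
    have hmem := hball τ hτ
    have h1 : ‖ut τ y * (starRingEnd ℂ) (u τ (-y))‖ ≤ C₂ * (1 + y ^ 2)⁻¹ * C₁ := by
      rw [norm_mul]
      have b1 : ‖ut τ y‖ ≤ C₂ * (1 + y ^ 2)⁻¹ := by
        refine (norm_le_SB_decay (ut τ) y).trans ?_
        have : SB (ut τ) ≤ C₂ := (le_abs_self _).trans (hC₂ τ hmem)
        exact mul_le_mul_of_nonneg_right this (by positivity)
      have b2 : ‖(starRingEnd ℂ) (u τ (-y))‖ ≤ C₁ := by
        rw [RCLike.norm_conj]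
        exact (norm_le_SB (u τ) (-y)).trans ((le_abs_self _).trans (hC₁ τ hmem))
      exact mul_le_mul b1 b2 (norm_nonneg _) (mul_nonneg hC₂0 (by positivity))
    have h2 : ‖u τ y * (starRingEnd ℂ) (ut τ (-y))‖ ≤ C₁ * (1 + y ^ 2)⁻¹ * C₂ := by
      rw [norm_mul]
      have b1 : ‖u τ y‖ ≤ C₁ * (1 + y ^ 2)⁻¹ := by
        refine (norm_le_SB_decay (u τ) y).trans ?_
        have : SB (u τ) ≤ C₁ := (le_abs_self _).trans (hC₁ τ hmem)
        exact mul_le_mul_of_nonneg_right this (by positivity)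
      have b2 : ‖(starRingEnd ℂ) (ut τ (-y))‖ ≤ C₂ := by
        rw [RCLike.norm_conj]
        exact (norm_le_SB (ut τ) (-y)).trans ((le_abs_self _).trans (hC₂ τ hmem))
      exact mul_le_mul b1 b2 (norm_nonneg _) (mul_nonneg hC₁0 (by positivity))
    calc ‖ut τ y * (starRingEnd ℂ) (u τ (-y)) + u τ y * (starRingEnd ℂ) (ut τ (-y))‖
        ≤ ‖ut τ y * (starRingEnd ℂ) (u τ (-y))‖ + ‖u τ y * (starRingEnd ℂ) (ut τ (-y))‖ :=
          norm_add_le _ _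
      _ ≤ C₂ * (1 + y ^ 2)⁻¹ * C₁ + C₁ * (1 + y ^ 2)⁻¹ * C₂ := add_le_add h1 h2
      _ = C₁ * C₂ * (1 + y ^ 2)⁻¹ + C₁ * C₂ * (1 + y ^ 2)⁻¹ := by ring
  · exact ((integrable_inv_one_add_sq.const_mul (C₁ * C₂)).add
      (integrable_inv_one_add_sq.const_mul (C₁ * C₂))).restrict
  · refine MeasureTheory.ae_of_all _ fun y τ _ => ?_
    exact (hderiv τ y).mul (conjD (hderiv τ (-y)))

lemma hasDerivAt_pinv_t (u ut : ℝ → SchwartzMap ℝ ℂ) (hu : Continuous u) (hut : Continuous ut)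
    (hderiv : ∀ t x : ℝ, HasDerivAt (fun τ => u τ x) (ut t x) t) (t x : ℝ) :
    HasDerivAt (fun τ => pinv (fun y => u τ y * (starRingEnd ℂ) (u τ (-y))) x)
      (pinv (fun y => ut t y * (starRingEnd ℂ) (u t (-y))
        + u t y * (starRingEnd ℂ) (ut t (-y))) x) t := by
  have h1 := key_setIntegral u ut hu hut hderiv t (Set.Iic x)
  have h2 := key_setIntegral u ut hu hut hderiv t (Set.Ici x)
  have := (h1.sub h2).const_mul (1 / 2 : ℂ)
  simpa only [pinv, Pi.sub_apply] using this
lemma tendsto_conj_neg_atTop (f : SchwartzMap ℝ ℂ) :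
    Filter.Tendsto (fun z : ℝ => (starRingEnd ℂ) (f (-z))) Filter.atTop (nhds 0) := by
  have h1 : Filter.Tendsto (fun z : ℝ => f (-z)) Filter.atTop (nhds 0) :=
    (schwartz_tendsto_atBot f).comp tendsto_neg_atTop_atBot
  have := (Complex.continuous_conj.tendsto 0).comp h1
  simpa [Function.comp_def] using this

lemma tendsto_conj_neg_atBot (f : SchwartzMap ℝ ℂ) :
    Filter.Tendsto (fun z : ℝ => (starRingEnd ℂ) (f (-z))) Filter.atBot (nhds 0) := by
  have h1 : Filter.Tendsto (fun z : ℝ => f (-z)) Filter.atBot (nhds 0) :=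
    (schwartz_tendsto_atTop f).comp tendsto_neg_atBot_atTop
  have := (Complex.continuous_conj.tendsto 0).comp h1
  simpa [Function.comp_def] using this
end NdNLSAux


open NdNLSAux in
/-- If `u(t,·)` is a continuously differentiable curve of Schwartz functions (with time
derivative `ut`) solving the nonlocal derivative NLS `i uₜ + ∂ₓ²u + α u u* ∂ₓu = 0`, and
`δ = −α/2`, then the gauge transform `v = u · exp(−δ ∂ₓ⁻¹(u u*))` solves
`i vₜ + ∂ₓ²v − α v² ∂ₓ(v*) − (α²/2) v³ (v*)² = 0`, where `w*(t,x) = conj(w(t,−x))`. -/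
theorem stmt_8 (α δ : ℝ) (hδ : δ = -α / 2) (u ut : ℝ → SchwartzMap ℝ ℂ)
    (hu : Continuous u) (hut : Continuous ut)
    (hderiv : ∀ t x : ℝ, HasDerivAt (fun τ => u τ x) (ut t x) t)
    (heq : ∀ t x : ℝ,
      Complex.I * ut t x + deriv (deriv (fun y => u t y)) x
        + (α : ℂ) * u t x * (starRingEnd ℂ) (u t (-x)) * deriv (fun y => u t y) x = 0)
    (v : ℝ → ℝ → ℂ)
    (hv : ∀ t x : ℝ, v t x =
      u t x * Complex.exp (-(δ : ℂ) * pinv (fun y => u t y * (starRingEnd ℂ) (u t (-y))) x)) :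
    ∀ t x : ℝ,
      Complex.I * deriv (fun τ => v τ x) t + deriv (deriv (fun y => v t y)) x
        - (α : ℂ) * (v t x) ^ 2 * deriv (fun y => (starRingEnd ℂ) (v t (-y))) x
        - ((α : ℂ) ^ 2 / 2) * (v t x) ^ 3 * ((starRingEnd ℂ) (v t (-x))) ^ 2 = 0 := by
  intro t x
  set D1 : SchwartzMap ℝ ℂ := SchwartzMap.derivCLM ℝ ℂ (u t) with hD1
  set D2 : SchwartzMap ℝ ℂ := SchwartzMap.derivCLM ℝ ℂ D1 with hD2
  have hder1 : deriv (fun y => u t y) = (⇑D1 : ℝ → ℂ) := by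
    funext z
    rw [hD1]
    exact (SchwartzMap.derivCLM_apply (𝕜 := ℝ) (u t) z).symm
  have hder2 : deriv (⇑D1 : ℝ → ℂ) = (⇑D2 : ℝ → ℂ) := by
    funext z
    rw [hD2]
    exact (SchwartzMap.derivCLM_apply (𝕜 := ℝ) D1 z).symm
  have hda : ∀ z : ℝ, HasDerivAt (fun y => u t y) (D1 z) z := by
    intro z
    have h : HasDerivAt (fun y => u t y) (deriv (fun y => u t y) z) z :=
      ((u t).differentiable.differentiableAt (x := z)).hasDerivAt
    rwa [hder1] at h
  have hdD1 : ∀ z : ℝ, HasDerivAt (⇑D1 : ℝ → ℂ) (D2 z) z := by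
    intro z
    have h : HasDerivAt (⇑D1 : ℝ → ℂ) (deriv (⇑D1 : ℝ → ℂ) z) z :=
      (D1.differentiable.differentiableAt (x := z)).hasDerivAt
    rwa [hder2] at h
  have hdb : ∀ z : ℝ, HasDerivAt (fun y => (starRingEnd ℂ) (u t (-y)))
      (-((starRingEnd ℂ) (D1 (-z)))) z := by
    intro z
    have h1 : HasDerivAt (fun y : ℝ => u t (-y)) (-(D1 (-z))) z := by
      have h0 := HasDerivAt.scomp_of_eq (hg := hda (-z)) (hh := hasDerivAt_neg z) (hy := rfl)
      simpa [Function.comp_def] using h0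
    simpa using conjD h1
  have hdcd : ∀ z : ℝ, HasDerivAt (fun y => (starRingEnd ℂ) (D1 (-y)))
      (-((starRingEnd ℂ) (D2 (-z)))) z := by
    intro z
    have h1 : HasDerivAt (fun y : ℝ => D1 (-y)) (-(D2 (-z))) z := by
      have h0 := HasDerivAt.scomp_of_eq (hg := hdD1 (-z)) (hh := hasDerivAt_neg z) (hy := rfl)
      simpa [Function.comp_def] using h0
    simpa using conjD h1
  -- the density ρ and its antiderivative
  set R : ℝ → ℂ := fun y => u t y * (starRingEnd ℂ) (u t (-y)) with hR
  have hRapp : ∀ y, R y = u t y * (starRingEnd ℂ) (u t (-y)) := fun _ => rfl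
  have hRint : Integrable R := integrable_mul_conj_neg (u t) (u t)
  have hRcont : Continuous R :=
    (u t).continuous.mul (Complex.continuous_conj.comp ((u t).continuous.comp continuous_neg))
  have hRsym : ∀ y, (starRingEnd ℂ) (R (-y)) = R y := by
    intro y
    simp only [hRapp, neg_neg, map_mul, Complex.conj_conj]
    ring
  have hdR : ∀ z : ℝ, HasDerivAt R
      (D1 z * (starRingEnd ℂ) (u t (-z)) + u t z * -((starRingEnd ℂ) (D1 (-z)))) z := by
    intro z
    rw [hR]
    exact (hda z).mul (hdb z)
  have hP : ∀ z : ℝ, HasDerivAt (pinv R) (R z) z := pinv_hasDerivAt hRint hRcont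
  have hdE : ∀ z : ℝ, HasDerivAt (fun y => Complex.exp (-(δ : ℂ) * pinv R y))
      (Complex.exp (-(δ : ℂ) * pinv R z) * (-(δ : ℂ) * R z)) z :=
    fun z => ((hP z).const_mul _).cexp
  have hdF : ∀ z : ℝ, HasDerivAt (fun y => Complex.exp ((δ : ℂ) * pinv R y))
      (Complex.exp ((δ : ℂ) * pinv R z) * ((δ : ℂ) * R z)) z :=
    fun z => ((hP z).const_mul _).cexp
  have hEF : Complex.exp (-(δ : ℂ) * pinv R x) * Complex.exp ((δ : ℂ) * pinv R x) = 1 := by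
    rw [← Complex.exp_add, show -(δ : ℂ) * pinv R x + (δ : ℂ) * pinv R x = 0 by ring,
      Complex.exp_zero]
  have hvty : ∀ y, v t y = u t y * Complex.exp (-(δ : ℂ) * pinv R y) := by
    intro y
    rw [hv t y, hR]
  -- first spatial derivative of v
  have hdvy : ∀ z : ℝ, HasDerivAt (fun y => v t y)
      (D1 z * Complex.exp (-(δ : ℂ) * pinv R z)
        + u t z * (Complex.exp (-(δ : ℂ) * pinv R z) * (-(δ : ℂ) * R z))) z := by
    intro z
    exact ((hda z).mul (hdE z)).congr_of_eventuallyEq (Filter.Eventually.of_forall hvty)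
  have hD : deriv (fun y => v t y) = fun z =>
      D1 z * Complex.exp (-(δ : ℂ) * pinv R z)
        + u t z * (Complex.exp (-(δ : ℂ) * pinv R z) * (-(δ : ℂ) * R z)) :=
    funext fun z => (hdvy z).deriv
  have hdv2 := ((hdD1 x).mul (hdE x)).add
    ((hda x).mul ((hdE x).mul ((hdR x).const_mul (-(δ : ℂ)))))
  simp only [Pi.mul_def, Pi.add_def] at hdv2
  -- star side
  have hvsty : ∀ y, (starRingEnd ℂ) (v t (-y))
      = (starRingEnd ℂ) (u t (-y)) * Complex.exp ((δ : ℂ) * pinv R y) := by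
    intro y
    rw [hv t (-y), ← hR, map_mul]
    congr 1
    rw [← Complex.exp_conj]
    congr 1
    rw [map_mul, pinv_conj_neg hRsym y,
      show (starRingEnd ℂ) (-(δ : ℂ)) = -(δ : ℂ) by simp [Complex.conj_ofReal], neg_mul_neg]
  have hdvs : HasDerivAt (fun y => (starRingEnd ℂ) (v t (-y)))
      (-((starRingEnd ℂ) (D1 (-x))) * Complex.exp ((δ : ℂ) * pinv R x)
        + (starRingEnd ℂ) (u t (-x)) * (Complex.exp ((δ : ℂ) * pinv R x) * ((δ : ℂ) * R x))) x :=
    ((hdb x).mul (hdF x)).congr_of_eventuallyEq (Filter.Eventually.of_forall hvsty)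
  -- the time-derivative of the density, rewritten via the equation
  set Rt : ℝ → ℂ := fun y =>
    ut t y * (starRingEnd ℂ) (u t (-y)) + u t y * (starRingEnd ℂ) (ut t (-y)) with hRt
  have hRtapp : ∀ y, Rt y
      = ut t y * (starRingEnd ℂ) (u t (-y)) + u t y * (starRingEnd ℂ) (ut t (-y)) :=
    fun _ => rfl
  have hRtint : Integrable Rt := by
    rw [hRt]
    exact (integrable_mul_conj_neg (ut t) (u t)).add (integrable_mul_conj_neg (u t) (ut t))
  have hut_eq : ∀ z : ℝ, ut t z = Complex.I * D2 z
      + Complex.I * (α : ℂ) * (u t z * (starRingEnd ℂ) (u t (-z)) * D1 z) := by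
    intro z
    have h := heq t z
    rw [hder1, hder2] at h
    linear_combination (-Complex.I) * h + ut t z * Complex.I_sq
  have hcut : ∀ z : ℝ, (starRingEnd ℂ) (ut t (-z)) = -(Complex.I * (starRingEnd ℂ) (D2 (-z)))
      - Complex.I * (α : ℂ)
        * ((starRingEnd ℂ) (u t (-z)) * u t z * (starRingEnd ℂ) (D1 (-z))) := by
    intro z
    rw [hut_eq (-z)]
    simp only [neg_neg, map_add, map_mul, Complex.conj_I, Complex.conj_ofReal, Complex.conj_conj]
    ring
  -- the explicit antiderivative g of Rt
  have hdg : ∀ z : ℝ, HasDerivAt (fun w => Complex.I * ((starRingEnd ℂ) (u t (-w)) * D1 w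
      + u t w * (starRingEnd ℂ) (D1 (-w)) + (α : ℂ) / 2 * (R w * R w))) (Rt z) z := by
    intro z
    have H := ((((hdb z).mul (hdD1 z)).add ((hda z).mul (hdcd z))).add
      (((hdR z).mul (hdR z)).const_mul ((α : ℂ) / 2))).const_mul Complex.I
    refine H.congr_deriv ?_
    rw [hRtapp z, hut_eq z, hcut z]
    simp only [hRapp]
    ring
  have hgtop : Filter.Tendsto (fun w => Complex.I * ((starRingEnd ℂ) (u t (-w)) * D1 w
      + u t w * (starRingEnd ℂ) (D1 (-w)) + (α : ℂ) / 2 * (R w * R w)))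
      Filter.atTop (nhds 0) := by
    have lR : Filter.Tendsto R Filter.atTop (nhds 0) := by
      rw [hR]
      simpa using (schwartz_tendsto_atTop (u t)).mul (tendsto_conj_neg_atTop (u t))
    have l1 := (tendsto_conj_neg_atTop (u t)).mul (schwartz_tendsto_atTop D1)
    have l2 := (schwartz_tendsto_atTop (u t)).mul (tendsto_conj_neg_atTop D1)
    have l3 := (lR.mul lR).const_mul ((α : ℂ) / 2)
    have := ((l1.add l2).add l3).const_mul Complex.I
    simpa using this
  have hgbot : Filter.Tendsto (fun w => Complex.I * ((starRingEnd ℂ) (u t (-w)) * D1 w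
      + u t w * (starRingEnd ℂ) (D1 (-w)) + (α : ℂ) / 2 * (R w * R w)))
      Filter.atBot (nhds 0) := by
    have lR : Filter.Tendsto R Filter.atBot (nhds 0) := by
      rw [hR]
      simpa using (schwartz_tendsto_atBot (u t)).mul (tendsto_conj_neg_atBot (u t))
    have l1 := (tendsto_conj_neg_atBot (u t)).mul (schwartz_tendsto_atBot D1)
    have l2 := (schwartz_tendsto_atBot (u t)).mul (tendsto_conj_neg_atBot D1)
    have l3 := (lR.mul lR).const_mul ((α : ℂ) / 2)
    have := ((l1.add l2).add l3).const_mul Complex.I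
    simpa using this
  have hPt : pinv Rt x = Complex.I * ((starRingEnd ℂ) (u t (-x)) * D1 x
      + u t x * (starRingEnd ℂ) (D1 (-x)) + (α : ℂ) / 2 * (R x * R x)) :=
    pinv_of_deriv hdg hRtint hgbot hgtop x
  -- the time derivative of v
  have hdvt : HasDerivAt (fun τ => v τ x)
      (ut t x * Complex.exp (-(δ : ℂ) * pinv R x)
        + u t x * (Complex.exp (-(δ : ℂ) * pinv R x) * (-(δ : ℂ) * pinv Rt x))) t := by
    have hTP := hasDerivAt_pinv_t u ut hu hut hderiv t x
    rw [← hRt] at hTP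
    have H := (hderiv t x).mul ((hTP.const_mul (-(δ : ℂ))).cexp)
    rw [← hR] at H
    exact H.congr_of_eventuallyEq (Filter.Eventually.of_forall fun τ => hv τ x)
  -- final assembly
  have hδ' : (δ : ℂ) = -((α : ℂ) / 2) := by rw [hδ]; push_cast; ring
  have h := heq t x
  rw [hder1, hder2] at h
  rw [hdvt.deriv, hD, hdv2.deriv, hdvs.deriv, hPt, hv t x, ← hR, hvsty x]
  simp only [hRapp]
  rw [hδ'] at hEF ⊢
  linear_combination (Complex.exp (-(-((α : ℂ) / 2)) * pinv R x)) * h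
    + ((α : ℂ) / 2 * u t x * Complex.exp (-(-((α : ℂ) / 2)) * pinv R x)
        * ((starRingEnd ℂ) (u t (-x)) * D1 x + u t x * (starRingEnd ℂ) (D1 (-x))
          + (α : ℂ) / 2 * (u t x * (starRingEnd ℂ) (u t (-x))
            * (u t x * (starRingEnd ℂ) (u t (-x)))))) * Complex.I_sq
    + ((α : ℂ) * (u t x) ^ 2 * (starRingEnd ℂ) (D1 (-x))
        * Complex.exp (-(-((α : ℂ) / 2)) * pinv R x)
      - (α : ℂ) ^ 2 / 2 * (u t x) ^ 3 * ((starRingEnd ℂ) (u t (-x))) ^ 2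
          * Complex.exp (-(-((α : ℂ) / 2)) * pinv R x) ^ 2
          * Complex.exp (-((α : ℂ) / 2) * pinv R x)) * hEF
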